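/- Let p be a prime, n ≥ 1, and let 𝔖 be a subsemigroup of GL(n, ℚ_p). Then the family of maps {T̄ : T ∈ 𝔖} acts distally on S_n if and only if the family {T̄ : T ∈ G} acts distally on S_n, where G is the subgroup of GL(n, ℚ_p) generated by 𝔖. -/

import Mathlib

open scoped MatrixGroups

/-- The real number `r`, assumed to be an integer power of `p`, interpreted as the
corresponding scalar in `ℚ_p` (junk value otherwise). -/
noncomputable def realToPadic (p : ℕ) [Fact p.Prime] (r : ℝ) : ℚ_[p] :=
  (p : ℚ_[p]) ^ ⌊Real.logb p r⌋

/-- The map `T̄` induced on the `p`-adic unit sphere by the matrix `T`: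
`T̄(x) = ‖T(x)‖_p ⬝ T(x)`. -/
noncomputable def sphereMap (p : ℕ) [Fact p.Prime] {n : ℕ}
    (T : Matrix (Fin n) (Fin n) ℚ_[p]) (y : Fin n → ℚ_[p]) : Fin n → ℚ_[p] :=
  realToPadic p ‖T.mulVec y‖ • T.mulVec y

/-- A family `S` of self-maps acts distally on an invariant subset `A`. -/
def ActsDistallyOn {X : Type*} [TopologicalSpace X] (S : Set (X → X)) (A : Set X) : Prop :=
  ∀ x ∈ A, ∀ y ∈ A, x ≠ y → ∀ d ∈ A, (d, d) ∉ closure ((fun f => (f x, f y)) '' S)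

namespace Stmt7Aux

variable (p : ℕ) [Fact p.Prime] {n : ℕ}

lemma p_gt_one : (1:ℝ) < p := by exact_mod_cast (Fact.out : p.Prime).one_lt

lemma p_pos' : (0:ℝ) < p := lt_trans one_pos (p_gt_one p)

lemma realToPadic_zpow (k : ℤ) : realToPadic p ((p:ℝ)^k) = (p:ℚ_[p])^k := by
  have hp : (1:ℝ) < p := p_gt_one p
  have h1 : Real.logb p ((p:ℝ)^k) = (k : ℝ) := by
    rw [← Real.rpow_intCast, Real.logb_rpow (by linarith) (by linarith)]
  unfold realToPadic
  rw [h1, Int.floor_intCast]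

lemma norm_p_zpow (k : ℤ) : ‖((p:ℚ_[p]))^k‖ = (p:ℝ)^(-k) :=
  Padic.norm_p_zpow k

lemma p_cast_ne_zero : ((p:ℚ_[p])) ≠ 0 :=
  Nat.cast_ne_zero.mpr (Fact.out : p.Prime).ne_zero

lemma exists_norm_zpow (v : Fin n → ℚ_[p]) (hv : v ≠ 0) : ∃ k : ℤ, ‖v‖ = (p:ℝ)^k := by
  have hne : (Finset.univ : Finset (Fin n)).Nonempty := by
    obtain ⟨i, _⟩ := Function.ne_iff.mp hv
    exact ⟨i, Finset.mem_univ i⟩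
  obtain ⟨i, _, hi⟩ := Finset.exists_mem_eq_sup Finset.univ hne (fun i => ‖v i‖₊)
  have hnorm : ‖v‖ = ‖v i‖ := by
    rw [Pi.norm_def, hi]; rfl
  have hvi : v i ≠ 0 := by
    have := norm_ne_zero_iff.mpr hv
    rw [hnorm] at this
    exact norm_ne_zero_iff.mp this
  exact ⟨-(v i).valuation, by rw [hnorm, Padic.norm_eq_zpow_neg_valuation hvi]⟩

lemma sphereMap_eq_of_norm (M : Matrix (Fin n) (Fin n) ℚ_[p]) (y : Fin n → ℚ_[p]) (k : ℤ)
    (h : ‖M.mulVec y‖ = (p:ℝ)^k) : sphereMap p M y = ((p:ℚ_[p])^k) • M.mulVec y := by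
  rw [sphereMap, h, realToPadic_zpow]

lemma ultra (a b : Fin n → ℚ_[p]) : ‖a + b‖ ≤ max ‖a‖ ‖b‖ := by
  rw [pi_norm_le_iff_of_nonneg (le_max_of_le_left (norm_nonneg a))]
  intro i
  calc ‖(a + b) i‖ = ‖a i + b i‖ := rfl
    _ ≤ max ‖a i‖ ‖b i‖ := Padic.nonarchimedean _ _
    _ ≤ max ‖a‖ ‖b‖ := max_le_max (norm_le_pi_norm a i) (norm_le_pi_norm b i)

lemma norm_eq_of_sub_lt {a b : Fin n → ℚ_[p]} (h : ‖a - b‖ < ‖b‖) : ‖a‖ = ‖b‖ := by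
  have h1 : ‖a‖ ≤ ‖b‖ := by
    have := ultra p b (a - b)
    simpa using this.trans (max_le le_rfl h.le)
  have h2 : ‖b‖ ≤ ‖a‖ := by
    have hb : a + -(a - b) = b := by ring
    have key := ultra p a (-(a - b))
    rw [hb, norm_neg] at key
    rcases le_max_iff.mp key with h' | h'
    · exact h'
    · exact absurd (h'.trans_lt h) (lt_irrefl _)
  exact le_antisymm h1 h2

lemma mulVec_ne_zero (T : GL (Fin n) ℚ_[p]) {x : Fin n → ℚ_[p]} (hx : x ≠ 0) :
    (T : Matrix (Fin n) (Fin n) ℚ_[p]).mulVec x ≠ 0 := by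
  intro h
  apply hx
  have h2 : ((T⁻¹ : GL (Fin n) ℚ_[p]) : Matrix (Fin n) (Fin n) ℚ_[p]).mulVec
      ((T : Matrix (Fin n) (Fin n) ℚ_[p]).mulVec x) = 0 := by
    rw [h, Matrix.mulVec_zero]
  rwa [Matrix.mulVec_mulVec, ← Units.val_mul, inv_mul_cancel, Units.val_one,
    Matrix.one_mulVec] at h2

lemma norm_sphereMap_eq_one (T : GL (Fin n) ℚ_[p]) {x : Fin n → ℚ_[p]} (hx : x ≠ 0) :
    ‖sphereMap p (T : Matrix (Fin n) (Fin n) ℚ_[p]) x‖ = 1 := by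
  obtain ⟨k, hk⟩ := exists_norm_zpow p _ (mulVec_ne_zero p T hx)
  rw [sphereMap_eq_of_norm p _ _ k hk, norm_smul, norm_p_zpow, hk, ← zpow_add₀
    (ne_of_gt (p_pos' p))]
  simp

/-- `sphereMap` is unchanged under scaling the input by a power of `p`. -/
lemma sphereMap_p_smul (M : Matrix (Fin n) (Fin n) ℚ_[p]) (k : ℤ) {y : Fin n → ℚ_[p]}
    (hy : M.mulVec y ≠ 0) :
    sphereMap p M (((p:ℚ_[p])^k) • y) = sphereMap p M y := by
  obtain ⟨m, hm⟩ := exists_norm_zpow p _ hy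
  have hsm : M.mulVec (((p:ℚ_[p])^k) • y) = ((p:ℚ_[p])^k) • M.mulVec y :=
    Matrix.mulVec_smul _ _ _
  have hnorm : ‖M.mulVec (((p:ℚ_[p])^k) • y)‖ = (p:ℝ)^(m - k) := by
    rw [hsm, norm_smul, norm_p_zpow, hm, ← zpow_add₀ (ne_of_gt (p_pos' p))]
    ring_nf
  rw [sphereMap_eq_of_norm p _ _ _ hnorm, sphereMap_eq_of_norm p _ _ _ hm, hsm, smul_smul,
    ← zpow_add₀ (p_cast_ne_zero p)]
  congr 1
  ring_nf

lemma sphereMap_mul (S T : GL (Fin n) ℚ_[p]) {x : Fin n → ℚ_[p]} (hx : x ≠ 0) :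
    sphereMap p ((S * T : GL (Fin n) ℚ_[p]) : Matrix (Fin n) (Fin n) ℚ_[p]) x =
      sphereMap p (S : Matrix (Fin n) (Fin n) ℚ_[p])
        (sphereMap p (T : Matrix (Fin n) (Fin n) ℚ_[p]) x) := by
  obtain ⟨k, hk⟩ := exists_norm_zpow p _ (mulVec_ne_zero p T hx)
  rw [sphereMap_eq_of_norm p _ _ k hk, sphereMap_p_smul]
  · rw [sphereMap, sphereMap, Matrix.mulVec_mulVec, Units.val_mul]
  · rw [Matrix.mulVec_mulVec, ← Units.val_mul]
    exact mulVec_ne_zero p (S * T) hx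

lemma sphereMap_one {x : Fin n → ℚ_[p]} (hx : ‖x‖ = 1) :
    sphereMap p (1 : Matrix (Fin n) (Fin n) ℚ_[p]) x = x := by
  have h : ‖(1 : Matrix (Fin n) (Fin n) ℚ_[p]).mulVec x‖ = (p:ℝ)^(0:ℤ) := by
    rw [Matrix.one_mulVec, hx]; simp
  rw [sphereMap_eq_of_norm p _ _ 0 h, Matrix.one_mulVec]
  simp

lemma continuous_mulVec (M : Matrix (Fin n) (Fin n) ℚ_[p]) :
    Continuous fun y : Fin n → ℚ_[p] => M.mulVec y := by
  have h := LinearMap.continuous_of_finiteDimensional (M.mulVecLin)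
  exact h.congr fun y => Matrix.mulVecLin_apply M y

lemma continuousAt_sphereMap (T : GL (Fin n) ℚ_[p]) (x : Fin n → ℚ_[p]) (hx : x ≠ 0) :
    ContinuousAt (sphereMap p (T : Matrix (Fin n) (Fin n) ℚ_[p])) x := by
  set M : Matrix (Fin n) (Fin n) ℚ_[p] := (T : Matrix (Fin n) (Fin n) ℚ_[p]) with hM
  have hv : M.mulVec x ≠ 0 := mulVec_ne_zero p T hx
  have hvpos : 0 < ‖M.mulVec x‖ := norm_pos_iff.mpr hv
  set U : Set (Fin n → ℚ_[p]) :=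
    (fun y => M.mulVec y) ⁻¹' Metric.ball (M.mulVec x) ‖M.mulVec x‖ with hU
  have hUopen : IsOpen U := Metric.isOpen_ball.preimage (continuous_mulVec p M)
  have hxU : x ∈ U := by
    simp only [hU, Set.mem_preimage, Metric.mem_ball, dist_self]
    exact hvpos
  have heq : ∀ y ∈ U, (fun y => realToPadic p ‖M.mulVec x‖ • M.mulVec y) y = sphereMap p M y := by
    intro y hy
    have hlt : ‖M.mulVec y - M.mulVec x‖ < ‖M.mulVec x‖ := by
      simpa [hU, dist_eq_norm] using hy
    have : ‖M.mulVec y‖ = ‖M.mulVec x‖ := norm_eq_of_sub_lt p hlt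
    simp only [sphereMap, this]
  have hg : ContinuousAt (fun y => realToPadic p ‖M.mulVec x‖ • M.mulVec y) x :=
    ((continuous_mulVec p M).const_smul (realToPadic p ‖M.mulVec x‖)).continuousAt
  exact hg.congr (Filter.eventuallyEq_of_mem (hUopen.mem_nhds hxU) heq)

variable (n)

/-- The `p`-adic unit sphere as a subtype. -/
abbrev Sph : Type := ↥(Metric.sphere (0 : Fin n → ℚ_[p]) 1)

variable {n}

lemma Sph.norm_eq (x : Sph p n) : ‖(x : Fin n → ℚ_[p])‖ = 1 :=
  mem_sphere_zero_iff_norm.mp x.2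

lemma Sph.ne_zero (x : Sph p n) : (x : Fin n → ℚ_[p]) ≠ 0 := by
  intro h
  have := Sph.norm_eq p x
  rw [h] at this
  simp at this

/-- The restriction of `T̄` to the unit sphere, as a self-map of the sphere. -/
noncomputable def phi (T : GL (Fin n) ℚ_[p]) : Function.End (Sph p n) := fun x =>
  ⟨sphereMap p (T : Matrix (Fin n) (Fin n) ℚ_[p]) ↑x,
    mem_sphere_zero_iff_norm.mpr (norm_sphereMap_eq_one p T (Sph.ne_zero p x))⟩

noncomputable instance : TopologicalSpace (Function.End (Sph p n)) :=
  inferInstanceAs (TopologicalSpace (Sph p n → Sph p n))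

instance : CompactSpace (Function.End (Sph p n)) :=
  inferInstanceAs (CompactSpace (Sph p n → Sph p n))

instance : T2Space (Function.End (Sph p n)) :=
  inferInstanceAs (T2Space (Sph p n → Sph p n))

lemma continuous_mul_right (g : Function.End (Sph p n)) :
    Continuous fun f : Function.End (Sph p n) => f * g :=
  continuous_pi fun x => continuous_apply (g x)

lemma phi_mul (S T : GL (Fin n) ℚ_[p]) : phi p (S * T) = phi p S * phi p T :=
  funext fun x => Subtype.ext (sphereMap_mul p S T (Sph.ne_zero p x))

lemma phi_one : phi p (1 : GL (Fin n) ℚ_[p]) = 1 :=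
  funext fun x => Subtype.ext (by
    show sphereMap p ((1 : GL (Fin n) ℚ_[p]) : Matrix (Fin n) (Fin n) ℚ_[p]) ↑x = ↑x
    rw [Units.val_one]
    exact sphereMap_one p (Sph.norm_eq p x))

lemma continuous_phi (T : GL (Fin n) ℚ_[p]) : Continuous (phi p T) := by
  apply Continuous.subtype_mk
  rw [continuous_iff_continuousAt]
  intro x
  exact (continuousAt_sphereMap p T ↑x (Sph.ne_zero p x)).comp
    continuous_subtype_val.continuousAt

variable (𝔖 : Subsemigroup (GL (Fin n) ℚ_[p]))

/-- The Ellis semigroup: the pointwise closure of the family `{T̄|_S : T ∈ 𝔖}` inside the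
space of self-maps of the unit sphere. -/
def Ell : Set (Function.End (Sph p n)) :=
  closure (phi p '' (𝔖 : Set (GL (Fin n) ℚ_[p])))

lemma Ell_isClosed : IsClosed (Ell p 𝔖) := isClosed_closure

lemma Ell_isCompact : IsCompact (Ell p 𝔖) := (Ell_isClosed p 𝔖).isCompact

lemma Ell_mul_mem {f g : Function.End (Sph p n)} (hf : f ∈ Ell p 𝔖) (hg : g ∈ Ell p 𝔖) :
    f * g ∈ Ell p 𝔖 := by
  have step1 : Set.MapsTo (fun h : Function.End (Sph p n) => h * g)
      (phi p '' (𝔖 : Set (GL (Fin n) ℚ_[p]))) (Ell p 𝔖) := by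
    rintro _ ⟨T, hT, rfl⟩
    have hcont : Continuous fun h : Function.End (Sph p n) => phi p T * h :=
      continuous_pi fun x => (continuous_phi p T).comp (continuous_apply x)
    have hmaps : Set.MapsTo (fun h : Function.End (Sph p n) => phi p T * h)
        (phi p '' (𝔖 : Set (GL (Fin n) ℚ_[p]))) (Ell p 𝔖) := by
      rintro _ ⟨U, hU, rfl⟩
      exact subset_closure ⟨T * U, 𝔖.mul_mem hT hU, phi_mul p T U⟩
    have := map_mem_closure hcont hg hmaps
    rwa [(Ell_isClosed p 𝔖).closure_eq] at this
  have := map_mem_closure (continuous_mul_right p g) hf step1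
  rwa [(Ell_isClosed p 𝔖).closure_eq] at this

lemma Ell_inj
    (H : ActsDistallyOn {f : (Fin n → ℚ_[p]) → Fin n → ℚ_[p] |
        ∃ T ∈ 𝔖, f = sphereMap p (T : Matrix (Fin n) (Fin n) ℚ_[p])}
      (Metric.sphere (0 : Fin n → ℚ_[p]) 1))
    {g : Function.End (Sph p n)} (hg : g ∈ Ell p 𝔖) {x y : Sph p n} (hxy : x ≠ y) :
    g x ≠ g y := by
  intro heq
  set ev : Function.End (Sph p n) → (Fin n → ℚ_[p]) × (Fin n → ℚ_[p]) :=
    fun h => ((h x : Fin n → ℚ_[p]), (h y : Fin n → ℚ_[p])) with hev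
  have hevc : Continuous ev :=
    (continuous_subtype_val.comp (continuous_apply x)).prodMk
      (continuous_subtype_val.comp (continuous_apply y))
  have hmaps : Set.MapsTo ev (phi p '' (𝔖 : Set (GL (Fin n) ℚ_[p])))
      ((fun f : (Fin n → ℚ_[p]) → Fin n → ℚ_[p] => (f ↑x, f ↑y)) ''
        {f | ∃ T ∈ 𝔖, f = sphereMap p (T : Matrix (Fin n) (Fin n) ℚ_[p])}) := by
    rintro _ ⟨T, hT, rfl⟩
    exact ⟨sphereMap p (T : Matrix (Fin n) (Fin n) ℚ_[p]), ⟨T, hT, rfl⟩, rfl⟩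
  have hd := map_mem_closure hevc hg hmaps
  have hevg : ev g = ((g x : Fin n → ℚ_[p]), (g x : Fin n → ℚ_[p])) := by
    rw [hev]; simp [heq]
  rw [hevg] at hd
  exact H ↑x x.2 ↑y y.2 (fun h => hxy (Subtype.ext h)) ↑(g x) (g x).2 hd

lemma exists_left_inverse
    (H : ActsDistallyOn {f : (Fin n → ℚ_[p]) → Fin n → ℚ_[p] |
        ∃ T ∈ 𝔖, f = sphereMap p (T : Matrix (Fin n) (Fin n) ℚ_[p])}
      (Metric.sphere (0 : Fin n → ℚ_[p]) 1))
    {f : Function.End (Sph p n)} (hf : f ∈ Ell p 𝔖) :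
    ∃ g ∈ Ell p 𝔖, g * f = 1 := by
  set R : Set (Function.End (Sph p n)) := (fun g => g * f) '' Ell p 𝔖 with hR
  have hRsub : R ⊆ Ell p 𝔖 := by
    rintro _ ⟨g, hg, rfl⟩
    exact Ell_mul_mem p 𝔖 hg hf
  have hRne : R.Nonempty := ⟨f * f, ⟨f, hf, rfl⟩⟩
  have hRcompact : IsCompact R := (Ell_isCompact p 𝔖).image (continuous_mul_right p f)
  have hRmul : ∀ a ∈ R, ∀ b ∈ R, a * b ∈ R := by
    rintro _ ⟨g, hg, rfl⟩ _ ⟨h, hh, rfl⟩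
    exact ⟨g * (f * h), Ell_mul_mem p 𝔖 hg (Ell_mul_mem p 𝔖 hf hh), by simp [mul_assoc]⟩
  obtain ⟨u, huR, hu⟩ := exists_idempotent_in_compact_subsemigroup
    (continuous_mul_right p) R hRne hRcompact hRmul
  have huE : u ∈ Ell p 𝔖 := hRsub huR
  have hu1 : u = 1 := by
    funext x
    show u x = x
    have h1 : u (u x) = u x := congrFun hu x
    by_contra hne
    exact Ell_inj p 𝔖 H huE (fun h => hne (h ▸ rfl) : x ≠ u x) h1.symm
  obtain ⟨g, hg, hgf⟩ := huR
  exact ⟨g, hg, hgf.trans hu1⟩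

lemma phi_mem_Ell
    (H : ActsDistallyOn {f : (Fin n → ℚ_[p]) → Fin n → ℚ_[p] |
        ∃ T ∈ 𝔖, f = sphereMap p (T : Matrix (Fin n) (Fin n) ℚ_[p])}
      (Metric.sphere (0 : Fin n → ℚ_[p]) 1))
    (hne : (𝔖 : Set (GL (Fin n) ℚ_[p])).Nonempty)
    {U : GL (Fin n) ℚ_[p]} (hU : U ∈ Subgroup.closure (𝔖 : Set (GL (Fin n) ℚ_[p]))) :
    phi p U ∈ Ell p 𝔖 := by
  have hone : (1 : Function.End (Sph p n)) ∈ Ell p 𝔖 := by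
    obtain ⟨T, hT⟩ := hne
    obtain ⟨g, hg, hgf⟩ := exists_left_inverse p 𝔖 H (subset_closure ⟨T, hT, rfl⟩)
    rw [← hgf]
    exact Ell_mul_mem p 𝔖 hg (subset_closure ⟨T, hT, rfl⟩)
  refine Subgroup.closure_induction ?_ ?_ ?_ ?_ hU
  · intro T hT
    exact subset_closure ⟨T, hT, rfl⟩
  · rw [phi_one]
    exact hone
  · intro a b _ _ ha hb
    rw [phi_mul]
    exact Ell_mul_mem p 𝔖 ha hb
  · intro a _ ha
    obtain ⟨g, hg, hgf⟩ := exists_left_inverse p 𝔖 H ha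
    have hright : phi p a * phi p a⁻¹ = 1 := by
      rw [← phi_mul, mul_inv_cancel, phi_one]
    have : g = phi p a⁻¹ := by
      calc g = g * (phi p a * phi p a⁻¹) := by rw [hright, mul_one]
        _ = (g * phi p a) * phi p a⁻¹ := by rw [mul_assoc]
        _ = phi p a⁻¹ := by rw [hgf, one_mul]
    rwa [← this]

end Stmt7Aux

/-- For a subsemigroup `𝔖` of `GL(n, ℚ_p)`, the family `{T̄ : T ∈ 𝔖}` acts distally on the
`p`-adic unit sphere iff the family `{T̄ : T ∈ G}` does, where `G` is the subgroup generated
by `𝔖`. -/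
theorem stmt7 (p : ℕ) [Fact p.Prime] (n : ℕ) (hn : 1 ≤ n)
    (𝔖 : Subsemigroup (GL (Fin n) ℚ_[p])) :
    ActsDistallyOn {f : (Fin n → ℚ_[p]) → Fin n → ℚ_[p] |
        ∃ T ∈ 𝔖, f = sphereMap p (T : Matrix (Fin n) (Fin n) ℚ_[p])}
      (Metric.sphere (0 : Fin n → ℚ_[p]) 1) ↔
      ActsDistallyOn {f : (Fin n → ℚ_[p]) → Fin n → ℚ_[p] |
          ∃ T ∈ Subgroup.closure (𝔖 : Set (GL (Fin n) ℚ_[p])),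
            f = sphereMap p (T : Matrix (Fin n) (Fin n) ℚ_[p])}
        (Metric.sphere (0 : Fin n → ℚ_[p]) 1) := by
  constructor
  · intro H x hx y hy hxy d hd hmem
    rcases Set.eq_empty_or_nonempty (𝔖 : Set (GL (Fin n) ℚ_[p])) with hemp | hne
    · -- `𝔖` is empty: the generated group is trivial and `1̄` is the identity on the sphere
      have hbot : Subgroup.closure (𝔖 : Set (GL (Fin n) ℚ_[p])) = ⊥ := by
        rw [hemp, Subgroup.closure_empty]
      have hsub : (fun f : (Fin n → ℚ_[p]) → Fin n → ℚ_[p] => (f x, f y)) ''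
          {f | ∃ T ∈ Subgroup.closure (𝔖 : Set (GL (Fin n) ℚ_[p])),
            f = sphereMap p (T : Matrix (Fin n) (Fin n) ℚ_[p])} ⊆ {(x, y)} := by
        rintro _ ⟨f, ⟨U, hU, rfl⟩, rfl⟩
        rw [hbot, Subgroup.mem_bot] at hU
        subst hU
        have hx1 : ‖x‖ = 1 := mem_sphere_zero_iff_norm.mp hx
        have hy1 : ‖y‖ = 1 := mem_sphere_zero_iff_norm.mp hy
        simp [Units.val_one, Stmt7Aux.sphereMap_one p hx1, Stmt7Aux.sphereMap_one p hy1]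
      have hdd := closure_minimal hsub isClosed_singleton hmem
      rw [Set.mem_singleton_iff, Prod.ext_iff] at hdd
      exact hxy (hdd.1.symm.trans hdd.2)
    · -- main case: use the Ellis semigroup
      have hxy' : (⟨x, hx⟩ : Stmt7Aux.Sph p n) ≠ ⟨y, hy⟩ :=
        fun h => hxy (congrArg Subtype.val h)
      set ev : Function.End (Stmt7Aux.Sph p n) → (Fin n → ℚ_[p]) × (Fin n → ℚ_[p]) :=
        fun h => ((h ⟨x, hx⟩ : Fin n → ℚ_[p]), (h ⟨y, hy⟩ : Fin n → ℚ_[p])) with hev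
      have hevc : Continuous ev :=
        (continuous_subtype_val.comp (continuous_apply _)).prodMk
          (continuous_subtype_val.comp (continuous_apply _))
      have hK : IsCompact (ev '' Stmt7Aux.Ell p 𝔖) :=
        (Stmt7Aux.Ell_isCompact p 𝔖).image hevc
      have hsub : (fun f : (Fin n → ℚ_[p]) → Fin n → ℚ_[p] => (f x, f y)) ''
          {f | ∃ T ∈ Subgroup.closure (𝔖 : Set (GL (Fin n) ℚ_[p])),
            f = sphereMap p (T : Matrix (Fin n) (Fin n) ℚ_[p])} ⊆ ev '' Stmt7Aux.Ell p 𝔖 := by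
        rintro _ ⟨f, ⟨U, hU, rfl⟩, rfl⟩
        exact ⟨Stmt7Aux.phi p U, Stmt7Aux.phi_mem_Ell p 𝔖 H hne hU, rfl⟩
      obtain ⟨g, hg, hgeq⟩ := closure_minimal hsub hK.isClosed hmem
      have h1 : (g ⟨x, hx⟩ : Fin n → ℚ_[p]) = d := (Prod.ext_iff.mp hgeq).1
      have h2 : (g ⟨y, hy⟩ : Fin n → ℚ_[p]) = d := (Prod.ext_iff.mp hgeq).2
      exact Stmt7Aux.Ell_inj p 𝔖 H hg hxy' (Subtype.ext (h1.trans h2.symm))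
  · intro H x hx y hy hxy d hd hmem
    refine H x hx y hy hxy d hd (closure_mono (Set.image_mono ?_) hmem)
    rintro f ⟨T, hT, rfl⟩
    exact ⟨T, Subgroup.subset_closure hT, rfl⟩
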